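/- In a finite MDP with n states, if the initial distribution d0 is not sure weakly synchronizing in T, then for every strategy σ there are at most 2^n indices i with M^σ_i(T) = 1. -/

import Mathlib

open scoped BigOperators
open Classical Filter

/-- A finite Markov decision process with real transition probabilities. -/
structure MDP (Q A : Type) [Fintype Q] [Fintype A] where
  δ : Q → A → Q → ℝ
  δ_nonneg : ∀ q a q', 0 ≤ δ q a q'
  δ_sum : ∀ q a, ∑ q', δ q a q' = 1

namespace MDP

variable {Q A : Type} [Fintype Q] [Fintype A]

/-- `d` is a probability distribution. -/
def IsDist (d : Q → ℝ) : Prop := (∀ q, 0 ≤ d q) ∧ ∑ q, d q = 1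

/-- A (randomized, history-dependent) strategy maps a history (list of past
state-action pairs) and the current state to a distribution over actions. -/
def IsStrategy (σ : List (Q × A) → Q → A → ℝ) : Prop :=
  (∀ h q a, 0 ≤ σ h q a) ∧ ∀ h q, ∑ a, σ h q a = 1

/-- The probability of the finite path `qs` (with actions `as`) of length `i`,
under strategy `σ` from initial distribution `d0`. -/
noncomputable def pathProb (M : MDP Q A) (σ : List (Q × A) → Q → A → ℝ)
    (d0 : Q → ℝ) (i : ℕ) (qs : Fin (i + 1) → Q) (as : Fin i → A) : ℝ :=
  d0 (qs 0) * ∏ j : Fin i,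
    (σ (List.ofFn (fun k : Fin j.val =>
          (qs ⟨k.val, by have := k.isLt; have := j.isLt; omega⟩,
           as ⟨k.val, by have := k.isLt; have := j.isLt; omega⟩)))
        (qs j.castSucc) (as j))
      * M.δ (qs j.castSucc) (as j) (qs j.succ)

/-- The distribution over states after `i` steps (`M^σ_i`). -/
noncomputable def stepDist (M : MDP Q A) (σ : List (Q × A) → Q → A → ℝ)
    (d0 : Q → ℝ) (i : ℕ) (q : Q) : ℝ :=
  ∑ qs : Fin (i + 1) → Q, ∑ as : Fin i → A,
    if qs (Fin.last i) = q then M.pathProb σ d0 i qs as else 0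

/-- The probability mass that a (sub)distribution assigns to a set `T`. -/
noncomputable def mass (d : Q → ℝ) (T : Set Q) : ℝ := ∑ q, T.indicator d q

/-- The support of a (sub)distribution. -/
def supp {α : Type} (d : α → ℝ) : Set α := {q | 0 < d q}

/-- One-step sure predecessors of `Y`. -/
def Pre (M : MDP Q A) (Y : Set Q) : Set Q :=
  {q | ∃ a, ∀ q', 0 < M.δ q a q' → q' ∈ Y}

/-- Probability of reaching `T` within `i` steps. -/
noncomputable def reachProb (M : MDP Q A) (σ : List (Q × A) → Q → A → ℝ)
    (d0 : Q → ℝ) (T : Set Q) (i : ℕ) : ℝ :=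
  ∑ qs : Fin (i + 1) → Q, ∑ as : Fin i → A,
    if ∃ j, qs j ∈ T then M.pathProb σ d0 i qs as else 0

/-- `d0` is almost-sure winning for the reachability objective `◇T`:
some strategy reaches `T` with probability one. -/
def ASReach (M : MDP Q A) (d0 : Q → ℝ) (T : Set Q) : Prop :=
  ∃ σ, IsStrategy σ ∧ (⨆ i : ℕ, M.reachProb σ d0 T i) = 1

/-- `d0` is limit-sure eventually synchronizing in `T`. -/
def LimitSureEventually (M : MDP Q A) (d0 : Q → ℝ) (T : Set Q) : Prop :=
  ∀ ε > (0 : ℝ), ∃ σ, IsStrategy σ ∧ ∃ i, 1 - ε ≤ mass (M.stepDist σ d0 i) T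

/-- `d0` is almost-sure weakly synchronizing in `T`. -/
def ASWeakly (M : MDP Q A) (d0 : Q → ℝ) (T : Set Q) : Prop :=
  ∃ σ, IsStrategy σ ∧ ∀ ε > (0 : ℝ), {i : ℕ | 1 - ε ≤ mass (M.stepDist σ d0 i) T}.Infinite

/-- `d0` is almost-sure strongly synchronizing in `T`. -/
def ASStrongly (M : MDP Q A) (d0 : Q → ℝ) (T : Set Q) : Prop :=
  ∃ σ, IsStrategy σ ∧ ∀ ε > (0 : ℝ), ∃ N, ∀ i ≥ N, 1 - ε ≤ mass (M.stepDist σ d0 i) T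

/-- The uniform distribution on a set `S`. -/
noncomputable def uniformOn (S : Set Q) : Q → ℝ :=
  fun q => if q ∈ S then 1 / (S.ncard : ℝ) else 0

/-- The uniform strategy, playing all actions uniformly at random. -/
noncomputable def uniformStrategy (Q A : Type) [Fintype A] :
    List (Q × A) → Q → A → ℝ :=
  fun _ _ _ => 1 / (Fintype.card A : ℝ)

/-- Action `a` is allowed in `q` w.r.t. `S` if all its successors stay in `S`. -/
def Allowed (M : MDP Q A) (S : Set Q) (q : Q) (a : A) : Prop :=
  ∀ q', 0 < M.δ q a q' → q' ∈ S

/-- Edge relation within `S` given the allowed actions. -/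
def ECEdge (M : MDP Q A) (S : Set Q) (q q' : Q) : Prop :=
  q ∈ S ∧ q' ∈ S ∧ ∃ a, M.Allowed S q a ∧ 0 < M.δ q a q'

/-- `S` is an end-component: closed and strongly connected via allowed actions. -/
def IsEC (M : MDP Q A) (S : Set Q) : Prop :=
  (∀ q ∈ S, ∃ a, M.Allowed S q a) ∧
  ∀ q ∈ S, ∀ q' ∈ S, Relation.ReflTransGen (M.ECEdge S) q q'

/-- The union of all end-components. -/
def ECUnion (M : MDP Q A) : Set Q := ⋃₀ {S | M.IsEC S}

/-- Positive always synchronizing in `T`. -/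
def PosAlways (M : MDP Q A) (d0 : Q → ℝ) (T : Set Q) : Prop :=
  ∃ σ, IsStrategy σ ∧ ∀ i, 0 < mass (M.stepDist σ d0 i) T

/-- Positive eventually synchronizing in `T`. -/
def PosEvent (M : MDP Q A) (d0 : Q → ℝ) (T : Set Q) : Prop :=
  ∃ σ, IsStrategy σ ∧ ∃ i, 0 < mass (M.stepDist σ d0 i) T

/-- Positive weakly synchronizing in `T`. -/
def PosWeakly (M : MDP Q A) (d0 : Q → ℝ) (T : Set Q) : Prop :=
  ∃ σ, IsStrategy σ ∧ ∀ N, ∃ i ≥ N, 0 < mass (M.stepDist σ d0 i) T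

/-- Positive strongly synchronizing in `T`. -/
def PosStrongly (M : MDP Q A) (d0 : Q → ℝ) (T : Set Q) : Prop :=
  ∃ σ, IsStrategy σ ∧ ∃ N, ∀ i ≥ N, 0 < mass (M.stepDist σ d0 i) T

/-- Bounded always synchronizing in `T`. -/
def BndAlways (M : MDP Q A) (d0 : Q → ℝ) (T : Set Q) : Prop :=
  ∃ σ, IsStrategy σ ∧ ∃ ε > (0 : ℝ), ∀ i, ε < mass (M.stepDist σ d0 i) T

/-- Bounded eventually synchronizing in `T`. -/
def BndEvent (M : MDP Q A) (d0 : Q → ℝ) (T : Set Q) : Prop :=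
  ∃ σ, IsStrategy σ ∧ ∃ ε > (0 : ℝ), ∃ i, ε < mass (M.stepDist σ d0 i) T

/-- Bounded weakly synchronizing in `T`. -/
def BndWeakly (M : MDP Q A) (d0 : Q → ℝ) (T : Set Q) : Prop :=
  ∃ σ, IsStrategy σ ∧ ∃ ε > (0 : ℝ), ∀ N, ∃ i ≥ N, ε < mass (M.stepDist σ d0 i) T

/-- Bounded strongly synchronizing in `T`. -/
def BndStrongly (M : MDP Q A) (d0 : Q → ℝ) (T : Set Q) : Prop :=
  ∃ σ, IsStrategy σ ∧ ∃ ε > (0 : ℝ), ∃ N, ∀ i ≥ N, ε < mass (M.stepDist σ d0 i) T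

section StmtAux

/-- The equivalence between `(Fin n → α) × α` and `Fin (n+1) → α` via `Fin.snoc`. -/
private def snocEquiv (n : ℕ) (α : Type) : ((Fin n → α) × α) ≃ (Fin (n + 1) → α) where
  toFun p := Fin.snoc p.1 p.2
  invFun f := (fun k => f k.castSucc, f (Fin.last n))
  left_inv p := by
    refine Prod.ext ?_ ?_ <;> simp
  right_inv f := by
    funext k
    refine Fin.lastCases ?_ ?_ k <;> simp

private lemma sum_snoc {n : ℕ} {α : Type} [Fintype α] (g : (Fin (n + 1) → α) → ℝ) :
    (∑ f : Fin (n + 1) → α, g f) = ∑ f0 : Fin n → α, ∑ x : α, g (Fin.snoc f0 x) := by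
  rw [← Equiv.sum_comp (snocEquiv n α) g, Fintype.sum_prod_type]
  rfl

lemma pathProb_nonneg (M : MDP Q A) {σ : List (Q × A) → Q → A → ℝ}
    (hσ : ∀ h q a, 0 ≤ σ h q a) {d0 : Q → ℝ} (hd0 : ∀ q, 0 ≤ d0 q)
    (i : ℕ) (qs : Fin (i + 1) → Q) (as : Fin i → A) : 0 ≤ M.pathProb σ d0 i qs as := by
  refine mul_nonneg (hd0 _) (Finset.prod_nonneg fun j _ => ?_)
  exact mul_nonneg (hσ _ _ _) (M.δ_nonneg _ _ _)

lemma pathProb_snoc (M : MDP Q A) (σ : List (Q × A) → Q → A → ℝ) (d0 : Q → ℝ) (i : ℕ)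
    (qs : Fin (i + 1) → Q) (as : Fin i → A) (q' : Q) (a : A) :
    M.pathProb σ d0 (i + 1) (Fin.snoc qs q') (Fin.snoc as a) =
      M.pathProb σ d0 i qs as *
        (σ (List.ofFn (fun k : Fin i => (qs ⟨k.val, by omega⟩, as ⟨k.val, k.isLt⟩)))
            (qs (Fin.last i)) a *
          M.δ (qs (Fin.last i)) a q') := by
  have hsnocq : ∀ (k : ℕ) (h2 : k < i + 2) (h : k < i + 1),
      (Fin.snoc qs q' : Fin (i + 2) → Q) ⟨k, h2⟩ = qs ⟨k, h⟩ := by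
    intro k h2 h
    have e : (⟨k, h2⟩ : Fin (i + 2)) = Fin.castSucc ⟨k, h⟩ := rfl
    rw [e, Fin.snoc_castSucc]
  have hsnoca : ∀ (k : ℕ) (h2 : k < i + 1) (h : k < i),
      (Fin.snoc as a : Fin (i + 1) → A) ⟨k, h2⟩ = as ⟨k, h⟩ := by
    intro k h2 h
    have e : (⟨k, h2⟩ : Fin (i + 1)) = Fin.castSucc ⟨k, h⟩ := rfl
    rw [e, Fin.snoc_castSucc]
  unfold pathProb
  rw [Fin.prod_univ_castSucc, ← mul_assoc]
  congr 1
  · congr 1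
    · refine Finset.prod_congr rfl fun j _ => ?_
      have h1 : (Fin.snoc qs q' : Fin (i + 2) → Q) (Fin.castSucc j).castSucc
          = qs j.castSucc := Fin.snoc_castSucc ..
      have h2 : (Fin.snoc as a : Fin (i + 1) → A) (Fin.castSucc j) = as j :=
        Fin.snoc_castSucc ..
      have h3 : (Fin.snoc qs q' : Fin (i + 2) → Q) (Fin.castSucc j).succ
          = qs j.succ := by
        have e : (Fin.castSucc j).succ = Fin.castSucc j.succ := rfl
        rw [e, Fin.snoc_castSucc]
      have h4 : (List.ofFn (fun k : Fin (Fin.castSucc j).val =>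
            ((Fin.snoc qs q' : Fin (i + 2) → Q) ⟨k.val, by have := k.isLt; have := j.isLt; omega⟩,
             (Fin.snoc as a : Fin (i + 1) → A) ⟨k.val, by have := k.isLt; have := j.isLt; omega⟩)))
          = List.ofFn (fun k : Fin j.val =>
            (qs ⟨k.val, by have := k.isLt; have := j.isLt; omega⟩,
             as ⟨k.val, by have := k.isLt; have := j.isLt; omega⟩)) := by
        refine congrArg List.ofFn (funext fun k => ?_)
        have hk : k.val < i := by have := k.isLt; have := j.isLt; omega
        exact Prod.ext (hsnocq k.val _ (by omega)) (hsnoca k.val _ hk)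
      rw [h1, h2, h3, h4]
  · have h5 : (Fin.snoc qs q' : Fin (i + 2) → Q) (Fin.castSucc (Fin.last i)) =
        qs (Fin.last i) := Fin.snoc_castSucc ..
    have h6 : (Fin.snoc as a : Fin (i + 1) → A) (Fin.last i) = a := Fin.snoc_last ..
    have h7 : (Fin.snoc qs q' : Fin (i + 2) → Q) (Fin.last i).succ = q' := by
      have e : (Fin.last i).succ = Fin.last (i + 1) := rfl
      rw [e, Fin.snoc_last]
    have h8 : (List.ofFn (fun k : Fin (Fin.last i).val =>
          ((Fin.snoc qs q' : Fin (i + 2) → Q) ⟨k.val, by have := k.isLt; omega⟩,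
           (Fin.snoc as a : Fin (i + 1) → A) ⟨k.val, by have := k.isLt; omega⟩)))
        = List.ofFn (fun k : Fin i =>
          (qs ⟨k.val, by omega⟩, as ⟨k.val, k.isLt⟩)) := by
      refine congrArg List.ofFn (funext fun k => ?_)
      exact Prod.ext (hsnocq k.val _ (by omega)) (hsnoca k.val _ k.isLt)
    rw [h5, h6, h7, h8]

/-- The distribution after `i` steps sums to one. -/
lemma sum_pathProb (M : MDP Q A) {σ : List (Q × A) → Q → A → ℝ} (hσ : IsStrategy σ)
    {d0 : Q → ℝ} (hd0 : IsDist d0) (i : ℕ) :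
    (∑ qs : Fin (i + 1) → Q, ∑ as : Fin i → A, M.pathProb σ d0 i qs as) = 1 := by
  induction i with
  | zero =>
    have h1 : ∀ qs : Fin 1 → Q, ∑ as : Fin 0 → A, M.pathProb σ d0 0 qs as = d0 (qs 0) := by
      intro qs
      have : M.pathProb σ d0 0 qs (default : Fin 0 → A) = d0 (qs 0) := by
        simp [pathProb]
      simp [Finset.univ_unique, this]
    rw [Finset.sum_congr rfl fun qs _ => h1 qs]
    rw [sum_snoc (n := 0) (fun qs : Fin 1 → Q => d0 (qs 0))]
    have h2 : ∀ f0 : Fin 0 → Q, ∀ x : Q, (Fin.snoc f0 x : Fin 1 → Q) 0 = x := by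
      intro f0 x
      have e : (0 : Fin 1) = Fin.last 0 := rfl
      rw [e, Fin.snoc_last]
    simp only [h2]
    simp [Finset.univ_unique, hd0.2]
  | succ i ih =>
    rw [sum_snoc (fun qs : Fin (i + 2) → Q => ∑ as : Fin (i + 1) → A, M.pathProb σ d0 (i+1) qs as)]
    have key : ∀ qs : Fin (i + 1) → Q, ∀ q' : Q,
        (∑ as : Fin (i + 1) → A, M.pathProb σ d0 (i + 1) (Fin.snoc qs q') as)
          = ∑ as : Fin i → A, ∑ a : A, M.pathProb σ d0 (i + 1) (Fin.snoc qs q') (Fin.snoc as a) :=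
      fun qs q' => sum_snoc _
    have key2 : ∀ qs : Fin (i + 1) → Q, ∀ as : Fin i → A,
        (∑ q' : Q, ∑ a : A, M.pathProb σ d0 (i + 1) (Fin.snoc qs q') (Fin.snoc as a))
          = M.pathProb σ d0 i qs as := by
      intro qs as
      simp only [M.pathProb_snoc σ d0 i qs as]
      rw [Finset.sum_comm]
      have h3 : ∀ a : A, (∑ q' : Q, M.pathProb σ d0 i qs as *
          (σ (List.ofFn (fun k : Fin i => (qs ⟨k.val, by omega⟩, as ⟨k.val, k.isLt⟩)))
            (qs (Fin.last i)) a * M.δ (qs (Fin.last i)) a q'))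
          = M.pathProb σ d0 i qs as *
            σ (List.ofFn (fun k : Fin i => (qs ⟨k.val, by omega⟩, as ⟨k.val, k.isLt⟩)))
              (qs (Fin.last i)) a := by
        intro a
        rw [← Finset.mul_sum]
        congr 1
        rw [← Finset.mul_sum, M.δ_sum, mul_one]
      rw [Finset.sum_congr rfl fun a _ => h3 a, ← Finset.mul_sum, hσ.2, mul_one]
    calc (∑ qs : Fin (i+1) → Q, ∑ q' : Q, ∑ as : Fin (i+1) → A,
            M.pathProb σ d0 (i+1) (Fin.snoc qs q') as)
        = ∑ qs : Fin (i+1) → Q, ∑ q' : Q, ∑ as : Fin i → A, ∑ a : A,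
            M.pathProb σ d0 (i+1) (Fin.snoc qs q') (Fin.snoc as a) := by
          exact Finset.sum_congr rfl fun qs _ => Finset.sum_congr rfl fun q' _ => key qs q'
      _ = ∑ qs : Fin (i+1) → Q, ∑ as : Fin i → A, ∑ q' : Q, ∑ a : A,
            M.pathProb σ d0 (i+1) (Fin.snoc qs q') (Fin.snoc as a) := by
          exact Finset.sum_congr rfl fun qs _ => Finset.sum_comm
      _ = ∑ qs : Fin (i+1) → Q, ∑ as : Fin i → A, M.pathProb σ d0 i qs as := by
          exact Finset.sum_congr rfl fun qs _ => Finset.sum_congr rfl fun as _ => key2 qs as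
      _ = 1 := ih

lemma stepDist_nonneg (M : MDP Q A) {σ : List (Q × A) → Q → A → ℝ}
    (hσ : ∀ h q a, 0 ≤ σ h q a) {d0 : Q → ℝ} (hd0 : ∀ q, 0 ≤ d0 q)
    (i : ℕ) (q : Q) : 0 ≤ M.stepDist σ d0 i q := by
  refine Finset.sum_nonneg fun qs _ => Finset.sum_nonneg fun as _ => ?_
  split
  · exact M.pathProb_nonneg hσ hd0 i qs as
  · exact le_refl 0

lemma sum_stepDist (M : MDP Q A) {σ : List (Q × A) → Q → A → ℝ} (hσ : IsStrategy σ)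
    {d0 : Q → ℝ} (hd0 : IsDist d0) (i : ℕ) :
    (∑ q, M.stepDist σ d0 i q) = 1 := by
  unfold stepDist
  rw [Finset.sum_comm]
  rw [← M.sum_pathProb hσ hd0 i]
  refine Finset.sum_congr rfl fun qs _ => ?_
  rw [Finset.sum_comm]
  refine Finset.sum_congr rfl fun as _ => ?_
  simp

lemma stepDist_zero (M : MDP Q A) (σ : List (Q × A) → Q → A → ℝ) (d0 : Q → ℝ) (q : Q) :
    M.stepDist σ d0 0 q = d0 q := by
  unfold stepDist
  have h1 : ∀ qs : Fin 1 → Q,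
      (∑ as : Fin 0 → A, if qs (Fin.last 0) = q then M.pathProb σ d0 0 qs as else 0)
        = if qs (Fin.last 0) = q then d0 (qs 0) else 0 := by
    intro qs
    have : M.pathProb σ d0 0 qs (default : Fin 0 → A) = d0 (qs 0) := by simp [pathProb]
    simp [Finset.univ_unique, this]
  rw [Finset.sum_congr rfl fun qs _ => h1 qs]
  rw [sum_snoc (n := 0) (fun qs : Fin 1 → Q => if qs (Fin.last 0) = q then d0 (qs 0) else 0)]
  have h2 : ∀ f0 : Fin 0 → Q, ∀ x : Q, (Fin.snoc f0 x : Fin 1 → Q) (Fin.last 0) = x :=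
    fun f0 x => Fin.snoc_last ..
  have h0 : (0 : Fin 1) = Fin.last 0 := rfl
  simp only [h0, h2]
  simp [Finset.univ_unique]

lemma le_stepDist (M : MDP Q A) {σ : List (Q × A) → Q → A → ℝ}
    (hσ : ∀ h q a, 0 ≤ σ h q a) {d0 : Q → ℝ} (hd0 : ∀ q, 0 ≤ d0 q)
    (i : ℕ) (qs : Fin (i + 1) → Q) (as : Fin i → A) :
    M.pathProb σ d0 i qs as ≤ M.stepDist σ d0 i (qs (Fin.last i)) := by
  unfold stepDist
  have step1 : M.pathProb σ d0 i qs as ≤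
      ∑ as' : Fin i → A, if qs (Fin.last i) = qs (Fin.last i)
        then M.pathProb σ d0 i qs as' else 0 := by
    have := Finset.single_le_sum (f := fun as' : Fin i → A =>
        if qs (Fin.last i) = qs (Fin.last i) then M.pathProb σ d0 i qs as' else 0)
      (fun as' _ => by
        split
        · exact M.pathProb_nonneg hσ hd0 i qs as'
        · exact le_refl 0) (Finset.mem_univ as)
    simpa using this
  refine le_trans step1 ?_
  refine Finset.single_le_sum (f := fun qs' : Fin (i+1) → Q =>
      ∑ as' : Fin i → A, if qs' (Fin.last i) = qs (Fin.last i)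
        then M.pathProb σ d0 i qs' as' else 0)
    (fun qs' _ => Finset.sum_nonneg fun as' _ => by
      split
      · exact M.pathProb_nonneg hσ hd0 i qs' as'
      · exact le_refl 0) (Finset.mem_univ qs)

lemma exists_path_of_stepDist_pos (M : MDP Q A) {σ : List (Q × A) → Q → A → ℝ}
    {d0 : Q → ℝ} (i : ℕ) (q : Q) (h : 0 < M.stepDist σ d0 i q) :
    ∃ qs : Fin (i + 1) → Q, ∃ as : Fin i → A,
      qs (Fin.last i) = q ∧ 0 < M.pathProb σ d0 i qs as := by
  by_contra hc
  push_neg at hc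
  have : M.stepDist σ d0 i q ≤ 0 := by
    unfold stepDist
    refine Finset.sum_nonpos fun qs _ => Finset.sum_nonpos fun as _ => ?_
    split
    · rename_i hlast
      exact hc qs as hlast
    · exact le_refl 0
  linarith

/-- Forward support dynamics: from any point of the support there is an action all of
whose successors are in the next support. -/
lemma supp_pre (M : MDP Q A) {σ : List (Q × A) → Q → A → ℝ} (hσ : IsStrategy σ)
    {d0 : Q → ℝ} (hd0 : IsDist d0) (i : ℕ) (q : Q) (hq : 0 < M.stepDist σ d0 i q) :
    ∃ a, ∀ q', 0 < M.δ q a q' → 0 < M.stepDist σ d0 (i + 1) q' := by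
  obtain ⟨qs, as, hlast, hpos⟩ := M.exists_path_of_stepDist_pos i q hq
  set H := List.ofFn (fun k : Fin i => (qs ⟨k.val, by omega⟩, as ⟨k.val, k.isLt⟩)) with hH
  have ha : ∃ a, 0 < σ H (qs (Fin.last i)) a := by
    by_contra hcon
    push_neg at hcon
    have h0 : (∑ a, σ H (qs (Fin.last i)) a) ≤ 0 :=
      Finset.sum_nonpos fun a _ => hcon a
    rw [hσ.2] at h0
    linarith
  obtain ⟨a, ha⟩ := ha
  refine ⟨a, fun q' hq' => ?_⟩
  have hppos : 0 < M.pathProb σ d0 (i + 1) (Fin.snoc qs q') (Fin.snoc as a) := by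
    rw [M.pathProb_snoc σ d0 i qs as q' a, ← hH]
    rw [hlast] at ha ⊢
    exact mul_pos hpos (mul_pos ha hq')
  have hle := M.le_stepDist hσ.1 hd0.1 (i + 1) (Fin.snoc qs q') (Fin.snoc as a)
  rw [Fin.snoc_last] at hle
  linarith

/-- Backward support dynamics. -/
lemma supp_step (M : MDP Q A) {σ : List (Q × A) → Q → A → ℝ}
    (hσ : ∀ h q a, 0 ≤ σ h q a) {d0 : Q → ℝ} (hd0 : ∀ q, 0 ≤ d0 q)
    (i : ℕ) (q' : Q) (h : 0 < M.stepDist σ d0 (i + 1) q') :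
    ∃ q a, ∃ H : List (Q × A), H.length = i ∧ 0 < M.stepDist σ d0 i q ∧
      0 < σ H q a ∧ 0 < M.δ q a q' := by
  obtain ⟨qs, as, hlast, hpos⟩ := M.exists_path_of_stepDist_pos (i + 1) q' h
  set qs0 : Fin (i + 1) → Q := fun k => qs k.castSucc with hqs0
  set as0 : Fin i → A := fun k => as k.castSucc with has0
  have hqs : qs = Fin.snoc qs0 (qs (Fin.last (i + 1))) := by
    funext k
    refine Fin.lastCases ?_ ?_ k
    · rw [Fin.snoc_last]
    · intro m; rw [Fin.snoc_castSucc]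
  have has : as = Fin.snoc as0 (as (Fin.last i)) := by
    funext k
    refine Fin.lastCases ?_ ?_ k
    · rw [Fin.snoc_last]
    · intro m; rw [Fin.snoc_castSucc]
  rw [hqs, has, M.pathProb_snoc] at hpos
  rw [hlast] at hpos  -- hlast : qs (Fin.last (i+1)) = q'
  have hp0 : 0 ≤ M.pathProb σ d0 i qs0 as0 := M.pathProb_nonneg hσ hd0 i qs0 as0
  set H := List.ofFn (fun k : Fin i => (qs0 ⟨k.val, by omega⟩, as0 ⟨k.val, k.isLt⟩)) with hHdef
  have hσ0 : 0 ≤ σ H (qs0 (Fin.last i)) (as (Fin.last i)) := hσ _ _ _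
  have hδ0 : 0 ≤ M.δ (qs0 (Fin.last i)) (as (Fin.last i)) q' := M.δ_nonneg _ _ _
  have hp : 0 < M.pathProb σ d0 i qs0 as0 := by
    rcases lt_or_eq_of_le hp0 with h1 | h1
    · exact h1
    · rw [← h1, zero_mul] at hpos; linarith
  have hrest : 0 < σ H (qs0 (Fin.last i)) (as (Fin.last i)) *
      M.δ (qs0 (Fin.last i)) (as (Fin.last i)) q' := by
    by_contra hcon
    push_neg at hcon
    nlinarith
  have hσpos : 0 < σ H (qs0 (Fin.last i)) (as (Fin.last i)) := by
    rcases lt_or_eq_of_le hσ0 with h1 | h1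
    · exact h1
    · rw [← h1, zero_mul] at hrest; linarith
  have hδpos : 0 < M.δ (qs0 (Fin.last i)) (as (Fin.last i)) q' := by
    rcases lt_or_eq_of_le hδ0 with h1 | h1
    · exact h1
    · rw [← h1, mul_zero] at hrest; linarith
  have hstep : 0 < M.stepDist σ d0 i (qs0 (Fin.last i)) :=
    lt_of_lt_of_le hp (M.le_stepDist hσ hd0 i qs0 as0)
  exact ⟨qs0 (Fin.last i), as (Fin.last i), H, by simp [hHdef], hstep, hσpos, hδpos⟩

lemma mass_eq_one_iff {d : Q → ℝ} (hnn : ∀ q, 0 ≤ d q) (hsum : ∑ q, d q = 1) (T : Set Q) :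
    mass d T = 1 ↔ ∀ q, q ∉ T → d q = 0 := by
  have hmass : mass d T = ∑ q, if q ∈ T then d q else 0 := by
    unfold mass
    exact Finset.sum_congr rfl fun q _ => by rw [Set.indicator_apply]
  constructor
  · intro h1 q hq
    have hsub : (∑ q, (d q - if q ∈ T then d q else 0)) = 0 := by
      rw [Finset.sum_sub_distrib, hsum, ← hmass, h1, sub_self]
    have hterm := (Finset.sum_eq_zero_iff_of_nonneg (fun q _ => ?_)).1 hsub q (Finset.mem_univ q)
    · rw [if_neg hq, sub_zero] at hterm
      exact hterm
    · split
      · simp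
      · simpa using hnn q
  · intro h1
    rw [hmass, ← hsum]
    refine Finset.sum_congr rfl fun q _ => ?_
    split
    · rfl
    · rename_i hq
      exact (h1 q hq).symm

end StmtAux

end MDP

open MDP in
/-- If `d0` is not sure weakly synchronizing in `T`, then for every strategy
there are at most `2^n` indices `i` with `M^σ_i(T) = 1`. -/
theorem stmt4 {Q A : Type} [Fintype Q] [Fintype A] (M : MDP Q A)
    (d0 : Q → ℝ) (hd0 : IsDist d0) (T : Set Q)
    (h : ¬ ∃ σ, IsStrategy σ ∧ {i : ℕ | mass (M.stepDist σ d0 i) T = 1}.Infinite) :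
    ∀ σ, IsStrategy σ → ∃ s : Finset ℕ, s.card ≤ 2 ^ Fintype.card Q ∧
      ∀ i : ℕ, mass (M.stepDist σ d0 i) T = 1 → i ∈ s := by
  classical
  intro σ hσ
  have hfin : {i : ℕ | mass (M.stepDist σ d0 i) T = 1}.Finite := by
    by_contra hinf
    exact h ⟨σ, hσ, hinf⟩
  by_cases hcard : hfin.toFinset.card ≤ 2 ^ Fintype.card Q
  · exact ⟨hfin.toFinset, hcard, fun i hi => hfin.mem_toFinset.2 hi⟩
  exfalso
  push_neg at hcard
  set φ : ℕ → Finset Q := fun t => Finset.univ.filter fun q => 0 < M.stepDist σ d0 t q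
    with hφdef
  have hmaps : ∀ t ∈ hfin.toFinset, φ t ∈ (Finset.univ : Finset (Finset Q)) :=
    fun t _ => Finset.mem_univ _
  have hlt : (Finset.univ : Finset (Finset Q)).card < hfin.toFinset.card := by
    rw [Finset.card_univ, Fintype.card_finset]; exact hcard
  obtain ⟨x, hx, y, hy, hxy, hfeq⟩ := Finset.exists_ne_map_eq_of_card_lt_of_maps_to hlt hmaps
  obtain ⟨i0, j0, hij, hi0, hj0, heq⟩ : ∃ i0 j0, i0 < j0 ∧ i0 ∈ hfin.toFinset ∧
      j0 ∈ hfin.toFinset ∧ φ i0 = φ j0 := by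
    rcases lt_or_gt_of_ne hxy with hlt' | hlt'
    · exact ⟨x, y, hlt', hx, hy, hfeq⟩
    · exact ⟨y, x, hlt', hy, hx, hfeq.symm⟩
  have hsupp : ∀ q, 0 < M.stepDist σ d0 j0 q → 0 < M.stepDist σ d0 i0 q := by
    intro q hq
    have h1 : q ∈ φ j0 := by
      simp only [hφdef]
      exact Finset.mem_filter.2 ⟨Finset.mem_univ q, hq⟩
    rw [← heq] at h1
    simp only [hφdef] at h1
    exact (Finset.mem_filter.1 h1).2
  have hiT : ∀ q, q ∉ T → M.stepDist σ d0 i0 q = 0 := by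
    have hm : mass (M.stepDist σ d0 i0) T = 1 := hfin.mem_toFinset.1 hi0
    exact (mass_eq_one_iff (fun q => M.stepDist_nonneg hσ.1 hd0.1 i0 q)
      (M.sum_stepDist hσ hd0 i0) T).1 hm
  set r := j0 - i0 with hrdef
  have hr : 0 < r := by omega
  have hji : i0 + r = j0 := by omega
  set ρ : ℕ → ℕ := fun t => if t < j0 then t else i0 + (t - i0) % r with hρdef
  have hρstep : ∀ t, ρ (t + 1) = ρ t + 1 ∨ (ρ t + 1 = j0 ∧ ρ (t + 1) = i0) := by
    intro t
    by_cases h1 : t + 1 < j0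
    · left
      simp only [hρdef]
      rw [if_pos h1, if_pos (by omega)]
    · by_cases h2 : t + 1 = j0
      · right
        constructor
        · simp only [hρdef]; rw [if_pos (by omega)]; omega
        · simp only [hρdef]
          rw [if_neg h1]
          have e : t + 1 - i0 = r := by omega
          rw [e, Nat.mod_self]
          omega
      · have ht : j0 ≤ t := by omega
        set m := (t - i0) % r with hm
        have hmlt : m < r := Nat.mod_lt _ hr
        have hmod : (t + 1 - i0) % r = (m + 1) % r := by
          have e1 : t + 1 - i0 = (t - i0) + 1 := by omega
          rw [e1, Nat.add_mod, Nat.add_mod m 1 r, Nat.mod_eq_of_lt hmlt, ← hm]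
        by_cases h3 : m + 1 = r
        · right
          constructor
          · simp only [hρdef]
            rw [if_neg (by omega)]
            rw [← hm]
            omega
          · simp only [hρdef]
            rw [if_neg h1, hmod, h3, Nat.mod_self]
            omega
        · left
          simp only [hρdef]
          rw [if_neg h1, if_neg (show ¬ t < j0 by omega), hmod,
            Nat.mod_eq_of_lt (by omega), ← hm]
          omega
  have hQne : Nonempty Q := by
    rcases isEmpty_or_nonempty Q with hQ | hQ
    · exfalso
      have := hd0.2
      rw [Finset.univ_eq_empty, Finset.sum_empty] at this
      norm_num at this
    · exact hQ
  have hAne : Nonempty A := by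
    rcases isEmpty_or_nonempty A with hA | hA
    · exfalso
      obtain ⟨q⟩ := hQne
      have := hσ.2 [] q
      rw [Finset.univ_eq_empty, Finset.sum_empty] at this
      norm_num at this
    · exact hA
  have key : ∀ t q, 0 < M.stepDist σ d0 (ρ t) q →
      ∃ a, ∀ q', 0 < M.δ q a q' → 0 < M.stepDist σ d0 (ρ (t + 1)) q' := by
    intro t q hq
    obtain ⟨a, ha⟩ := M.supp_pre hσ hd0 (ρ t) q hq
    refine ⟨a, fun q' hq' => ?_⟩
    have h1 := ha q' hq'
    rcases hρstep t with hcase | ⟨hc1, hc2⟩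
    · rwa [hcase]
    · rw [hc1] at h1
      rw [hc2]
      exact hsupp q' h1
  set g : ℕ → Q → A := fun t q =>
    if hq : 0 < M.stepDist σ d0 (ρ t) q then (key t q hq).choose else Classical.arbitrary A
    with hgdef
  have hg : ∀ t q, ∀ hq : 0 < M.stepDist σ d0 (ρ t) q, ∀ q',
      0 < M.δ q (g t q) q' → 0 < M.stepDist σ d0 (ρ (t + 1)) q' := by
    intro t q hq q' hq'
    simp only [hgdef, dif_pos hq] at hq'
    exact (key t q hq).choose_spec q' hq'
  set σ' : List (Q × A) → Q → A → ℝ := fun h q a => if a = g h.length q then 1 else 0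
    with hσ'def
  have hσ'str : IsStrategy σ' := by
    constructor
    · intro h q a
      simp only [hσ'def]
      split <;> norm_num
    · intro h q
      simp only [hσ'def]
      rw [Finset.sum_ite_eq' Finset.univ (g h.length q) (fun _ => (1 : ℝ))]
      simp
  have hinv : ∀ t q, 0 < M.stepDist σ' d0 t q → 0 < M.stepDist σ d0 (ρ t) q := by
    intro t
    induction t with
    | zero =>
      intro q hq
      rw [M.stepDist_zero] at hq
      have hρ0 : ρ 0 = 0 := by
        simp only [hρdef]
        rw [if_pos (by omega)]
      rw [hρ0, M.stepDist_zero]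
      exact hq
    | succ t ih =>
      intro q' hq'
      obtain ⟨q, a, H, hH, hstep, hσpos, hδpos⟩ := M.supp_step hσ'str.1 hd0.1 t q' hq'
      have hZ := ih q hstep
      have hga : a = g t q := by
        by_contra hne
        simp only [hσ'def] at hσpos
        rw [hH, if_neg hne] at hσpos
        linarith
      rw [hga] at hδpos
      exact hg t q hZ q' hδpos
  refine h ⟨σ', hσ'str, ?_⟩
  have hmem : ∀ k : ℕ, mass (M.stepDist σ' d0 (j0 + k * r)) T = 1 := by
    intro k
    have h1 : j0 + k * r = i0 + (k + 1) * r := by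
      rw [← hji]; ring
    have hρt : ρ (j0 + k * r) = i0 := by
      simp only [hρdef]
      rw [if_neg (by omega)]
      have h2 : j0 + k * r - i0 = (k + 1) * r := by omega
      rw [h2, Nat.mul_mod_left]
      omega
    refine (mass_eq_one_iff (fun q => M.stepDist_nonneg hσ'str.1 hd0.1 (j0 + k * r) q)
      (M.sum_stepDist hσ'str hd0 (j0 + k * r)) T).2 ?_
    intro q hqT
    by_contra hne
    have hpos : 0 < M.stepDist σ' d0 (j0 + k * r) q :=
      lt_of_le_of_ne (M.stepDist_nonneg hσ'str.1 hd0.1 (j0 + k * r) q) (Ne.symm hne)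
    have h3 := hinv (j0 + k * r) q hpos
    rw [hρt] at h3
    rw [hiT q hqT] at h3
    exact lt_irrefl 0 h3
  apply Set.infinite_of_injective_forall_mem (f := fun k : ℕ => j0 + k * r)
  · intro a b hab
    simp only at hab
    have h4 : a * r = b * r := by omega
    exact Nat.eq_of_mul_eq_mul_right hr h4
  · intro k
    exact hmem k
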